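/- arXiv:2508.06489 — 4 statements merged into one kernel-verified Lean document; each statement's English description precedes it below -/
import Mathlib

section
/- Let 0 < α < 1/2, set a = α/(1−α) and b = a², and define ρ(α) = (ab + (a−b)(1+a)/2) / (ab + (a−b)(1+a)/2 + (1−a)(1 − (a+b)/2)). Then: ρ(α) < a for 0 < α < 1/3; ρ(α) = a for α = 1/3; and ρ(α) > a for 1/3 < α < 1/2. In particular, for 1/3 < α < 1/2 the limiting relative reward of the DAG withholding attack exceeds α/(1−α), the upper bound on the relative reward of selfish mining in Nakamoto consensus. -/
/-- The limiting relative reward ρ(α) of the DAG withholding attack compared with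
`a = α/(1−α)`: smaller for α < 1/3, equal at α = 1/3, larger for α > 1/3. -/
theorem stmt5 (α : ℝ) (hα0 : 0 < α) (hα1 : α < 1 / 2)
    (a b ρ : ℝ) (ha : a = α / (1 - α)) (hb : b = a ^ 2)
    (hρ : ρ = (a * b + (a - b) * (1 + a) / 2) /
      (a * b + (a - b) * (1 + a) / 2 + (1 - a) * (1 - (a + b) / 2))) :
    (α < 1 / 3 → ρ < a) ∧ (α = 1 / 3 → ρ = a) ∧ (1 / 3 < α → ρ > a) := by
  have h1 : (0 : ℝ) < 1 - α := by linarith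
  have ha0 : 0 < a := by rw [ha]; positivity
  have ha1 : a < 1 := by rw [ha, div_lt_one h1]; linarith
  subst hb
  have hD : 0 < a * a ^ 2 + (a - a ^ 2) * (1 + a) / 2 + (1 - a) * (1 - (a + a ^ 2) / 2) := by
    nlinarith [mul_pos ha0 ha0, mul_pos (mul_pos ha0 ha0) ha0,
      mul_pos (sub_pos.mpr ha1) ha0]
  refine ⟨fun h => ?_, fun h => ?_, fun h => ?_⟩
  · have ha2 : a < 1 / 2 := by rw [ha, div_lt_iff₀ h1]; linarith
    rw [hρ, div_lt_iff₀ hD]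
    nlinarith [mul_pos (mul_pos (mul_pos (sub_pos.mpr ha1) ha0)
      (by linarith : (0:ℝ) < 1 - 2 * a)) (by linarith : (0:ℝ) < 1 + a)]
  · have ha2 : a = 1 / 2 := by rw [ha, h]; norm_num
    rw [hρ, ha2]; norm_num
  · have ha2 : 1 / 2 < a := by rw [ha, lt_div_iff₀ h1]; linarith
    rw [hρ, gt_iff_lt, lt_div_iff₀ hD]
    nlinarith [mul_pos (mul_pos (mul_pos (sub_pos.mpr ha1) ha0)
      (by linarith : (0:ℝ) < 2 * a - 1)) (by linarith : (0:ℝ) < 1 + a)]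
end

section
/- Let L ≥ 1 and N ≥ 0 be integers and set M = L + N. Then ∫₀¹ L(1−x)^{L−1} · ( Σ_{k=1}^{M−1} k(1−x)^{k−1}x + M(1−x)^{M−1} ) dx = L·Σ_{k=1}^{M−1} k/((L+k)(L+k−1)) + L·M/(L+M−1), where the integral is the Lebesgue integral over the interval (0,1). (Note L·M/(L+M−1) = L(L+N)/(2L+N−1).) -/
open MeasureTheory

lemma int_pow1 (n : ℕ) : ∫ x in (0:ℝ)..1, (1 - x) ^ n = 1 / ((n : ℝ) + 1) := by
  have h := intervalIntegral.integral_comp_sub_left (a := (0:ℝ)) (b := 1)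
      (fun u => u ^ n) 1
  simp only [sub_self, sub_zero] at h
  rw [h, integral_pow]
  simp

lemma int_pow2 (n : ℕ) :
    ∫ x in (0:ℝ)..1, (1 - x) ^ n * x = 1 / (((n : ℝ) + 1) * ((n : ℝ) + 2)) := by
  have h := intervalIntegral.integral_comp_sub_left (a := (0:ℝ)) (b := 1)
      (fun u => u ^ n * (1 - u)) 1
  simp only [sub_self, sub_zero, sub_sub_cancel] at h
  rw [h]
  simp_rw [mul_sub, mul_one, ← pow_succ]
  rw [intervalIntegral.integral_sub ((continuous_pow n).intervalIntegrable 0 1)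
      ((continuous_pow (n+1)).intervalIntegrable 0 1), integral_pow, integral_pow]
  push_cast
  rw [div_sub_div _ _ (by positivity) (by positivity)]
  simp only [one_pow, zero_pow (by omega : n + 1 ≠ 0), zero_pow (by omega : n + 1 + 1 ≠ 0)]
  ring_nf

/-- Unconditional expected honest waste in the practical DoS proof-withholding attack
on Bobtail, where `M = L + N`. -/
theorem stmt10 (L N : ℕ) (hL : 1 ≤ L) (M : ℕ) (hM : M = L + N) :
    ∫ x in Set.Ioo (0 : ℝ) 1, (L : ℝ) * (1 - x) ^ (L - 1) *
        ((∑ k ∈ Finset.Icc 1 (M - 1), (k : ℝ) * (1 - x) ^ (k - 1) * x)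
          + (M : ℝ) * (1 - x) ^ (M - 1))
      = (L : ℝ) * (∑ k ∈ Finset.Icc 1 (M - 1), (k : ℝ) / (((L : ℝ) + k) * ((L : ℝ) + k - 1)))
        + (L : ℝ) * M / ((L : ℝ) + M - 1) := by
  have hM1 : 1 ≤ M := by omega
  have key : ∀ x : ℝ, (L : ℝ) * (1 - x) ^ (L - 1) *
        ((∑ k ∈ Finset.Icc 1 (M - 1), (k : ℝ) * (1 - x) ^ (k - 1) * x)
          + (M : ℝ) * (1 - x) ^ (M - 1))
      = (∑ k ∈ Finset.Icc 1 (M - 1),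
          ((L : ℝ) * k) * ((1 - x) ^ ((L - 1) + (k - 1)) * x))
        + ((L : ℝ) * M) * (1 - x) ^ ((L - 1) + (M - 1)) := by
    intro x
    rw [mul_add, Finset.mul_sum]
    congr 1
    · exact Finset.sum_congr rfl fun k _ => by rw [pow_add]; ring
    · rw [pow_add]; ring
  simp_rw [key]
  rw [← MeasureTheory.integral_Ioc_eq_integral_Ioo,
    ← intervalIntegral.integral_of_le (by norm_num : (0:ℝ) ≤ 1)]
  rw [intervalIntegral.integral_add, intervalIntegral.integral_finset_sum]
  · simp_rw [intervalIntegral.integral_const_mul, int_pow1, int_pow2]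
    rw [Finset.mul_sum]
    congr 1
    · refine Finset.sum_congr rfl fun k hk => ?_
      have hk1 : 1 ≤ k := (Finset.mem_Icc.mp hk).1
      push_cast [Nat.cast_sub hL, Nat.cast_sub hk1]
      have h1 : (L : ℝ) + k - 1 ≠ 0 := by
        have : (1:ℝ) ≤ (L:ℝ) + k - 1 := by
          have : (2:ℝ) ≤ (L:ℝ) + k := by
            push_cast [← Nat.cast_add]
            exact_mod_cast by omega
          linarith
        linarith
      ring
    · push_cast [Nat.cast_sub hL, Nat.cast_sub hM1]
      have h1 : (L : ℝ) + M - 1 ≠ 0 := by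
        have : (1:ℝ) ≤ (L:ℝ) + M - 1 := by
          have : (2:ℝ) ≤ (L:ℝ) + M := by
            exact_mod_cast by omega
          linarith
        linarith
      ring
  · intro k _
    exact (continuous_const.mul
      (((continuous_const.sub continuous_id).pow _).mul continuous_id)).intervalIntegrable 0 1
  · apply Continuous.intervalIntegrable
    exact continuous_finset_sum _ fun k _ => continuous_const.mul
      (((continuous_const.sub continuous_id).pow _).mul continuous_id)
  · exact (continuous_const.mul
      ((continuous_const.sub continuous_id).pow _)).intervalIntegrable 0 1
end

section
/- Let L ≥ 10 and N ≥ 0 be integers. Then L·Σ_{k=1}^{L+N−1} k/((L+k)(L+k−1)) + L(L+N)/(2L+N−1) > 2L/3. -/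
/-- For `L ≥ 10`, the expected honest waste exceeds `2L/3`. -/
theorem stmt11 (L N : ℕ) (hL : 10 ≤ L) :
    (L : ℝ) * (∑ k ∈ Finset.Icc 1 (L + N - 1), (k : ℝ) / (((L : ℝ) + k) * ((L : ℝ) + k - 1)))
      + (L : ℝ) * ((L : ℝ) + N) / (2 * (L : ℝ) + N - 1) > 2 * (L : ℝ) / 3 := by
  have hL0 : (0:ℝ) < L := by
    have : (10:ℝ) ≤ L := by exact_mod_cast hL
    linarith
  set M : ℕ := L + N - 1 with hMdef
  have hMc : (M : ℝ) = (L : ℝ) + N - 1 := by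
    have h1 : M + 1 = L + N := by omega
    have : ((M:ℕ) : ℝ) + 1 = (L : ℝ) + N := by exact_mod_cast congrArg (Nat.cast (R := ℝ)) h1
    linarith
  set m : ℝ := (L : ℝ) + M with hmdef
  have hm2 : m = 2 * (L : ℝ) + N - 1 := by rw [hmdef, hMc]; ring
  have hm_ge : 2 * (L : ℝ) - 1 ≤ m := by
    have : (0:ℝ) ≤ N := Nat.cast_nonneg N
    rw [hm2]; linarith
  have hm0 : (0:ℝ) < m := by linarith
  -- the telescoping function
  set g : ℕ → ℝ := fun i => Real.log ((L:ℝ) + i) + (L:ℝ) / ((L:ℝ) + i) with hg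
  -- per-term bound
  have key : ∀ i ∈ Finset.range M,
      g (i+1) - g i ≤ ((1 + i : ℕ) : ℝ) / (((L:ℝ) + (1 + i : ℕ)) * ((L:ℝ) + (1 + i : ℕ) - 1)) := by
    intro i _
    have hx : (10:ℝ) ≤ (L:ℝ) + i := by
      have : (0:ℝ) ≤ i := Nat.cast_nonneg i
      have : (10:ℝ) ≤ L := by exact_mod_cast hL
      linarith [Nat.cast_nonneg (α := ℝ) i]
    set x : ℝ := (L:ℝ) + i with hxdef
    have hx0 : (0:ℝ) < x := by linarith
    have hx1 : (0:ℝ) < x + 1 := by linarith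
    have hlog : Real.log (x + 1) - Real.log x ≤ 1 / x := by
      have hpos : (0:ℝ) < (x+1)/x := by positivity
      have h := Real.log_le_sub_one_of_pos hpos
      rw [Real.log_div (by linarith) (by linarith)] at h
      have : (x+1)/x - 1 = 1/x := by field_simp; ring
      linarith [this ▸ h]
    have hcast : ((1 + i : ℕ) : ℝ) = x + 1 - (L:ℝ) := by push_cast [hxdef]; ring
    have hg1 : g (i+1) = Real.log (x + 1) + (L:ℝ) / (x + 1) := by
      simp only [hg]
      have : (L:ℝ) + ((i:ℕ)+1 : ℕ) = x + 1 := by push_cast [hxdef]; ring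
      rw [this]
    have hg0 : g i = Real.log x + (L:ℝ) / x := by simp only [hg, hxdef]
    have hden : ((L:ℝ) + (1 + i : ℕ)) = x + 1 := by push_cast [hxdef]; ring
    rw [hg1, hg0, hden, hcast]
    have halg : (L:ℝ) / (x + 1) - (L:ℝ) / x = -((L:ℝ) / (x * (x+1))) := by
      field_simp; ring
    have halg2 : (x + 1 - (L:ℝ)) / ((x + 1) * (x + 1 - 1)) = 1/x - (L:ℝ) / (x * (x+1)) := by
      have h1 : (x + 1 - 1) = x := by ring
      rw [h1, div_sub_div _ _ (ne_of_gt hx0) (by positivity), div_eq_div_iff (by positivity) (by positivity)]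
      ring
    rw [halg2]
    linarith [hlog, halg]
  -- telescoping sum
  have htel : ∑ i ∈ Finset.range M, (g (i+1) - g i) = g M - g 0 := Finset.sum_range_sub g M
  -- reindex the Icc sum
  have hre : ∑ k ∈ Finset.Icc 1 M, (k : ℝ) / (((L : ℝ) + k) * ((L : ℝ) + k - 1))
      = ∑ i ∈ Finset.range M, ((1 + i : ℕ) : ℝ) / (((L:ℝ) + (1 + i : ℕ)) * ((L:ℝ) + (1 + i : ℕ) - 1)) := by
    rw [← Finset.Ico_add_one_right_eq_Icc, Finset.sum_Ico_eq_sum_range]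
    simp
  have hSge : g M - g 0 ≤ ∑ k ∈ Finset.Icc 1 M, (k : ℝ) / (((L : ℝ) + k) * ((L : ℝ) + k - 1)) := by
    rw [hre, ← htel]
    exact Finset.sum_le_sum key
  have hgM : g M = Real.log m + (L:ℝ) / m := by simp only [hg, hmdef]
  have hg00 : g 0 = Real.log (L:ℝ) + 1 := by
    simp only [hg]
    rw [Nat.cast_zero, add_zero]
    have : (L:ℝ) / (L:ℝ) = 1 := div_self (ne_of_gt hL0)
    rw [this]
  -- log bound: log m - log L + 1/m ≥ log 2
  have hlog2 : Real.log 2 ≤ Real.log m - Real.log (L:ℝ) + 1/m := by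
    have hpos : (0:ℝ) < 2 * (L:ℝ) / m := by positivity
    have h := Real.log_le_sub_one_of_pos hpos
    have hlogd : Real.log (2 * (L:ℝ) / m) = Real.log 2 + Real.log (L:ℝ) - Real.log m := by
      rw [Real.log_div (by positivity) (ne_of_gt hm0), Real.log_mul (by norm_num) (ne_of_gt hL0)]
    rw [hlogd] at h
    have hfrac : 2 * (L:ℝ) / m - 1 ≤ 1/m := by
      rw [div_sub' (ne_of_gt hm0), div_le_div_iff₀ hm0 hm0]
      nlinarith
    linarith
  have hlog2v : (2:ℝ)/3 < Real.log 2 := by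
    have := Real.log_two_gt_d9
    linarith
  -- assemble
  rw [← hm2]
  have hNc : (L:ℝ) + N = m + 1 - (L:ℝ) := by rw [hm2]; ring
  rw [hNc]
  have hS := hSge
  rw [hgM, hg00] at hS
  have hmain : (L:ℝ) * (Real.log m + (L:ℝ)/m - (Real.log (L:ℝ) + 1)) + (L:ℝ) * (m + 1 - (L:ℝ)) / m
      = (L:ℝ) * (Real.log m - Real.log (L:ℝ)) + (L:ℝ) / m := by
    field_simp; ring
  have hfinal : (L:ℝ) * (Real.log m - Real.log (L:ℝ)) + (L:ℝ) / m ≥ (L:ℝ) * Real.log 2 := by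
    have h1 : Real.log m - Real.log (L:ℝ) + 1/m ≥ Real.log 2 := hlog2
    have h2 : (L:ℝ) * (Real.log m - Real.log (L:ℝ) + 1/m) ≥ (L:ℝ) * Real.log 2 :=
      mul_le_mul_of_nonneg_left h1 (le_of_lt hL0)
    have : (L:ℝ) * (Real.log m - Real.log (L:ℝ) + 1/m)
        = (L:ℝ) * (Real.log m - Real.log (L:ℝ)) + (L:ℝ)/m := by ring
    linarith [this ▸ h2]
  have hLS : (L:ℝ) * (Real.log m + (L:ℝ)/m - (Real.log (L:ℝ) + 1))
      ≤ (L:ℝ) * ∑ k ∈ Finset.Icc 1 M, (k : ℝ) / (((L : ℝ) + k) * ((L : ℝ) + k - 1)) :=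
    mul_le_mul_of_nonneg_left hS (le_of_lt hL0)
  have hlast : (L:ℝ) * Real.log 2 > 2 * (L:ℝ) / 3 := by nlinarith [hL0, hlog2v]
  linarith [hLS, hmain, hfinal, hlast]
end

section
/- Let L ≥ 1 be an integer, let 0 < α < 1, 0 < r < 1, and let F_M > 0 and F_{M′} > 0 be real numbers. Then F_M·α·( r + (1−r)/L + ((1−r)/L)(L−1)α ) + F_{M′}·(1−α)·((1−r)/L)(L−1)α ≥ F_{M′}·(1−r)·α if and only if F_M / F_{M′} ≥ 1 − r/( r + ((1−r)/L)(1 + (L−1)α) ). -/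
/-- Profitability condition for a miner to vote for its own ledger instead of the
ledger offering the most fees. -/
theorem stmt13 (L : ℕ) (hL : 1 ≤ L) (α r FM FM' : ℝ)
    (hα0 : 0 < α) (hα1 : α < 1) (hr0 : 0 < r) (hr1 : r < 1)
    (hFM : 0 < FM) (hFM' : 0 < FM') :
    FM * α * (r + (1 - r) / L + (1 - r) / L * ((L : ℝ) - 1) * α)
        + FM' * (1 - α) * ((1 - r) / L * ((L : ℝ) - 1) * α)
      ≥ FM' * (1 - r) * α
    ↔ FM / FM' ≥ 1 - r / (r + (1 - r) / L * (1 + ((L : ℝ) - 1) * α)) := by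
  have hL1 : (1:ℝ) ≤ (L:ℝ) := by exact_mod_cast hL
  have hLpos : (0:ℝ) < (L:ℝ) := by linarith
  have hc : 0 < r + (1 - r) / L * (1 + ((L : ℝ) - 1) * α) := by
    have : 0 ≤ (1 - r) / L * (1 + ((L : ℝ) - 1) * α) := by
      apply mul_nonneg (div_nonneg (by linarith) hLpos.le)
      nlinarith
    linarith
  rw [ge_iff_le, ge_iff_le, le_div_iff₀ hFM']
  conv_rhs => rw [one_sub_div hc.ne', div_mul_eq_mul_div, div_le_iff₀ hc]
  set D := (1 - r) / (L : ℝ) with hDdef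
  have hD : D * L = 1 - r := div_mul_cancel₀ _ hLpos.ne'
  constructor <;> intro h <;> nlinarith [hD, mul_pos hα0 hc, mul_pos hFM' hα0,
    mul_pos (mul_pos hFM' hα0) hc]
end
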